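/- Let c > 0 and suppose ϑ is the pushforward of ν under the map x ↦ (x, cx), where ν is a Borel probability measure on [0,∞) with ν({0}) = 0 and ∫ x dν(x) = 1/α. Then for every z with 0 < z ≤ c and every y ∈ ℝ: ϑ_e^z([0,∞) × [y,∞)) = z if y ≤ 0, and ϑ_e^z([0,∞) × [y,∞)) = c ν_e([y c⁻¹, ∞)) − (c − z) ν_e([y (c − z)⁻¹, ∞)) if y > 0, where the last term is understood to be zero when z = c. -/

import Mathlib

open MeasureTheory Set Filter Topology

noncomputable section

open ENNReal

/-- The right half-plane `ℍ₊ = [0,∞) × ℝ`, as a subset of `ℝ × ℝ`. -/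
def Hplus : Set (ℝ × ℝ) := {p | 0 ≤ p.1}

/-- Translation of a set: `B + w = {b + w : b ∈ B}`. -/
def shiftSet (B : Set (ℝ × ℝ)) (w : ℝ × ℝ) : Set (ℝ × ℝ) := (fun b => b + w) '' B

/-- The excess lifetime distribution of `ν`: the measure on `ℝ` with Lebesgue density
`v ↦ α ν([v,∞))` on `[0,∞)` and `0` on `(-∞,0)`. -/
def excessLife (α : ℝ) (ν : Measure ℝ) : Measure ℝ :=
  volume.withDensity fun v => if 0 ≤ v then ENNReal.ofReal α * ν (Ici v) else 0

lemma meas_F (ν : Measure ℝ) : Measurable fun v : ℝ => ν (Ici v) :=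
  Antitone.measurable fun _ _ hab => measure_mono (Ici_subset_Ici.2 hab)

lemma lintegral_affine (g : ℝ → ℝ≥0∞) (hg : Measurable g) (a b : ℝ) (ha : 0 < a)
    (s : Set ℝ) (hs : MeasurableSet s) :
    ∫⁻ u in (fun u => a * u + b) ⁻¹' s, g (a * u + b) = ENNReal.ofReal a⁻¹ * ∫⁻ v in s, g v := by
  have hf : Measurable fun u : ℝ => a * u + b := (measurable_const_mul a).add_const b
  have hmap : Measure.map (fun u : ℝ => a * u + b) volume = ENNReal.ofReal a⁻¹ • volume := by
    have h1 : (fun u : ℝ => a * u + b) = (fun x : ℝ => x + b) ∘ (fun u : ℝ => a * u) := rfl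
    rw [h1, ← Measure.map_map (measurable_add_const b) (measurable_const_mul a)]
    rw [show (fun u : ℝ => a * u) = (a * ·) from rfl, Real.map_volume_mul_left ha.ne',
      Measure.map_smul, map_add_right_eq_self volume b, abs_of_pos (inv_pos.2 ha)]
  calc ∫⁻ u in (fun u => a * u + b) ⁻¹' s, g (a * u + b)
      = ∫⁻ v, g v ∂((volume.restrict ((fun u => a * u + b) ⁻¹' s)).map (fun u => a * u + b)) :=
        (lintegral_map hg hf).symm
    _ = ∫⁻ v, g v ∂((Measure.map (fun u => a * u + b) volume).restrict s) := by
        rw [Measure.restrict_map hf hs]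
    _ = ENNReal.ofReal a⁻¹ * ∫⁻ v in s, g v := by
        rw [hmap, Measure.restrict_smul, lintegral_smul_measure, smul_eq_mul]

/-- linear deadlines `ϑ = ν ∘ (x ↦ (x,cx))⁻¹`, case `0 < z ≤ c`:
`ϑ_e^z([0,∞)×[y,∞)) = z` for `y ≤ 0`, and
`= c ν_e([y/c,∞)) − (c−z) ν_e([y/(c−z),∞))` for `y > 0` (last term zero when `z = c`). -/
theorem stmt_13 (α : ℝ) (hα : 0 < α) (c : ℝ) (hc : 0 < c)
    (ν : Measure ℝ) [IsProbabilityMeasure ν]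
    (hνsupp : ν {x : ℝ | x < 0} = 0) (hνatom : ν ({0} : Set ℝ) = 0)
    (hνmean : ∫⁻ x, ENNReal.ofReal x ∂ν = ENNReal.ofReal α⁻¹)
    (ϑ : Measure (ℝ × ℝ)) (hϑ : ϑ = ν.map (fun x : ℝ => (x, c * x)))
    (z : ℝ) (hz : 0 < z) (hzc : z ≤ c) (τ : Measure (ℝ × ℝ)) [IsFiniteMeasure τ]
    (hτsupp : τ {p : ℝ × ℝ | p.1 < 0} = 0)
    (hτ : ∀ B : Set (ℝ × ℝ), MeasurableSet B → B ⊆ Hplus →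
      τ B = ENNReal.ofReal α * ∫⁻ u in Ioi (0 : ℝ), ϑ (shiftSet B (u / z, u))) :
    ∀ y : ℝ,
      (y ≤ 0 → (τ (Ici (0 : ℝ) ×ˢ Ici y)).toReal = z) ∧
      (0 < y → (τ (Ici (0 : ℝ) ×ˢ Ici y)).toReal
          = c * (excessLife α ν (Ici (y / c))).toReal
            - (c - z) * (excessLife α ν (Ici (y / (c - z)))).toReal) := by
  intro y
  set F : ℝ → ℝ≥0∞ := fun v => ν (Ici v) with hF
  have hFmeas : Measurable F := meas_F ν
  -- mean identity
  have hmean : ∫⁻ v in Ioi (0 : ℝ), F v = ENNReal.ofReal α⁻¹ := by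
    have h0 : 0 ≤ᵐ[ν] (id : ℝ → ℝ) := by
      rw [EventuallyLE, ae_iff]
      simpa [not_le] using hνsupp
    have := lintegral_eq_lintegral_meas_le ν h0 measurable_id.aemeasurable
    simp only [id] at this
    rw [← hνmean]
    exact this.symm
  have hfin : ∀ s : Set ℝ, s ⊆ Ioi 0 → ∫⁻ v in s, F v ≠ ⊤ := by
    intro s hs
    exact ((lintegral_mono_set hs).trans_lt (by rw [hmean]; exact ENNReal.ofReal_lt_top)).ne
  -- shifted set
  have hshift : ∀ u : ℝ, shiftSet (Ici (0 : ℝ) ×ˢ Ici y) (u / z, u)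
      = Ici (u / z) ×ˢ Ici (y + u) := by
    intro u
    ext ⟨p1, p2⟩
    constructor
    · rintro ⟨⟨b1, b2⟩, ⟨hb1, hb2⟩, h⟩
      simp only [Prod.mk_add_mk, Prod.mk.injEq] at h
      simp only [mem_Ici] at hb1 hb2
      simp only [mem_prod, mem_Ici]
      constructor <;> linarith [h.1, h.2]
    · rintro ⟨h1, h2⟩
      simp only [mem_Ici] at h1 h2
      exact ⟨(p1 - u / z, p2 - u), ⟨by simpa using h1, by simp only [mem_Ici]; linarith⟩,
        by simp [Prod.mk_add_mk]⟩
  -- value of ϑ on products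
  have hϑval : ∀ u : ℝ, ϑ (Ici (u / z) ×ˢ Ici (y + u)) = F (max (u / z) ((y + u) / c)) := by
    intro u
    rw [hϑ, Measure.map_apply (show Measurable fun x : ℝ => (x, c * x) from
      measurable_id.prodMk (measurable_const_mul c))
      (measurableSet_Ici.prod measurableSet_Ici)]
    congr 1
    ext x
    simp only [mem_preimage, mem_prod, mem_Ici, max_le_iff]
    constructor
    · rintro ⟨h1, h2⟩
      exact ⟨h1, (div_le_iff₀ hc).2 (by linarith)⟩
    · rintro ⟨h1, h2⟩
      exact ⟨h1, by have := (div_le_iff₀ hc).1 h2; linarith⟩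
  have key : τ (Ici (0 : ℝ) ×ˢ Ici y)
      = ENNReal.ofReal α * ∫⁻ u in Ioi (0 : ℝ), F (max (u / z) ((y + u) / c)) := by
    rw [hτ _ (measurableSet_Ici.prod measurableSet_Ici) (fun p hp => hp.1)]
    congr 1
    exact lintegral_congr fun u => by rw [hshift u, hϑval u]
  have hexcess : ∀ a : ℝ, 0 ≤ a →
      excessLife α ν (Ici a) = ENNReal.ofReal α * ∫⁻ v in Ioi a, F v := by
    intro a ha
    rw [excessLife, withDensity_apply _ measurableSet_Ici,
      ← Measure.restrict_congr_set (Ioi_ae_eq_Ici (a := a)),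
      setLIntegral_congr_fun measurableSet_Ioi
        (fun v (hv : v ∈ Ioi a) => if_pos (ha.trans hv.le)),
      lintegral_const_mul _ hFmeas]
  constructor
  · -- case y ≤ 0
    intro hy
    have hGeq : ∫⁻ u in Ioi (0 : ℝ), F (max (u / z) ((y + u) / c))
        = ∫⁻ u in Ioi (0 : ℝ), F (z⁻¹ * u + 0) := by
      refine setLIntegral_congr_fun measurableSet_Ioi (fun u (hu : u ∈ Ioi 0) => ?_)
      have hu' : (0 : ℝ) < u := hu
      have : max (u / z) ((y + u) / c) = z⁻¹ * u + 0 := by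
        rw [max_eq_left, add_zero, inv_mul_eq_div]
        rw [div_le_div_iff₀ hc hz]
        nlinarith
      rw [this]
    have hpre : (fun u : ℝ => z⁻¹ * u + 0) ⁻¹' Ioi 0 = Ioi 0 := by
      ext u
      simp only [mem_preimage, mem_Ioi, add_zero]
      constructor <;> intro h <;> nlinarith [inv_pos.2 hz, mul_pos (inv_pos.2 hz) h]
    have h1 := lintegral_affine F hFmeas z⁻¹ 0 (inv_pos.2 hz) (Ioi 0) measurableSet_Ioi
    rw [hpre, inv_inv, hmean] at h1
    rw [key, hGeq, h1, ← ENNReal.ofReal_mul hz.le, ← ENNReal.ofReal_mul hα.le,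
      ENNReal.toReal_ofReal (by positivity)]
    field_simp
  · -- case 0 < y
    intro hy
    rcases eq_or_lt_of_le hzc with hzc' | hzc'
    · -- z = c
      subst hzc'
      have hGeq : ∫⁻ u in Ioi (0 : ℝ), F (max (u / z) ((y + u) / z))
          = ∫⁻ u in Ioi (0 : ℝ), F (z⁻¹ * u + y / z) := by
        refine setLIntegral_congr_fun measurableSet_Ioi (fun u (hu : u ∈ Ioi 0) => ?_)
        have : max (u / z) ((y + u) / z) = z⁻¹ * u + y / z := by
          rw [max_eq_right (by rw [div_le_div_iff₀ hz hz]; nlinarith)]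
          ring
        rw [this]
      have hpre : (fun u : ℝ => z⁻¹ * u + y / z) ⁻¹' Ioi (y / z) = Ioi 0 := by
        ext u
        simp only [mem_preimage, mem_Ioi]
        have h2 : z⁻¹ * u + y / z = (u + y) / z := by ring
        rw [h2, div_lt_div_iff₀ hz hz]
        constructor <;> intro h <;> nlinarith
      have h1 := lintegral_affine F hFmeas z⁻¹ (y / z) (inv_pos.2 hz) (Ioi (y / z))
        measurableSet_Ioi
      rw [hpre, inv_inv] at h1
      rw [key, hGeq, h1, hexcess (y / z) (by positivity), sub_self, zero_mul, sub_zero,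
        ENNReal.toReal_mul, ENNReal.toReal_mul, ENNReal.toReal_mul,
        ENNReal.toReal_ofReal hα.le, ENNReal.toReal_ofReal hz.le]
      ring
    · -- z < c
      have hcz : (0 : ℝ) < c - z := by linarith
      set u₀ : ℝ := z * y / (c - z) with hu₀def
      set b : ℝ := y / (c - z) with hbdef
      have hu₀ : 0 < u₀ := by positivity
      have hycb : y / c ≤ b := by
        rw [hbdef, div_le_div_iff₀ hc hcz]
        nlinarith
      -- split the integral
      have hsplitu : ∫⁻ u in Ioi (0 : ℝ), F (max (u / z) ((y + u) / c))
          = (∫⁻ u in Ioc (0 : ℝ) u₀, F (max (u / z) ((y + u) / c)))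
            + ∫⁻ u in Ioi u₀, F (max (u / z) ((y + u) / c)) := by
        rw [← Ioc_union_Ioi_eq_Ioi hu₀.le, lintegral_union measurableSet_Ioi
          Ioc_disjoint_Ioi_same]
      -- first piece
      have hmax1 : ∫⁻ u in Ioc (0 : ℝ) u₀, F (max (u / z) ((y + u) / c))
          = ∫⁻ u in Ioc (0 : ℝ) u₀, F (c⁻¹ * u + y / c) := by
        refine setLIntegral_congr_fun measurableSet_Ioc (fun u hu => ?_)
        have hu2 : u ≤ u₀ := hu.2
        have huc : u * (c - z) ≤ z * y := by
          rw [hu₀def] at hu2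
          exact (le_div_iff₀ hcz).1 hu2
        have : max (u / z) ((y + u) / c) = c⁻¹ * u + y / c := by
          rw [max_eq_right]
          · ring
          · rw [div_le_div_iff₀ hz hc]; nlinarith
        rw [this]
      have hpre1 : (fun u : ℝ => c⁻¹ * u + y / c) ⁻¹' Ioc (y / c) b = Ioc 0 u₀ := by
        ext u
        simp only [mem_preimage, mem_Ioc]
        have h2 : c⁻¹ * u + y / c = (u + y) / c := by ring
        rw [h2]
        constructor
        · rintro ⟨ha1, ha2⟩
          rw [div_lt_div_iff₀ hc hc] at ha1
          rw [hbdef, div_le_div_iff₀ hc hcz] at ha2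
          constructor
          · nlinarith
          · rw [hu₀def, le_div_iff₀ hcz]; nlinarith
        · rintro ⟨ha1, ha2⟩
          rw [hu₀def, le_div_iff₀ hcz] at ha2
          constructor
          · rw [div_lt_div_iff₀ hc hc]; nlinarith
          · rw [hbdef, div_le_div_iff₀ hc hcz]; nlinarith
      have h1 := lintegral_affine F hFmeas c⁻¹ (y / c) (inv_pos.2 hc) (Ioc (y / c) b)
        measurableSet_Ioc
      rw [hpre1, inv_inv] at h1
      -- second piece
      have hmax2 : ∫⁻ u in Ioi u₀, F (max (u / z) ((y + u) / c))
          = ∫⁻ u in Ioi u₀, F (z⁻¹ * u + 0) := by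
        refine setLIntegral_congr_fun measurableSet_Ioi (fun u (hu : u ∈ Ioi u₀) => ?_)
        have hu2 : u₀ < u := hu
        have huc : z * y ≤ u * (c - z) := by
          rw [hu₀def] at hu2
          exact ((div_le_iff₀ hcz).1 hu2.le)
        have : max (u / z) ((y + u) / c) = z⁻¹ * u + 0 := by
          rw [max_eq_left, add_zero, inv_mul_eq_div]
          rw [div_le_div_iff₀ hc hz]; nlinarith
        rw [this]
      have hpre2 : (fun u : ℝ => z⁻¹ * u + 0) ⁻¹' Ioi b = Ioi u₀ := by
        ext u
        simp only [mem_preimage, mem_Ioi, add_zero, inv_mul_eq_div]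
        rw [hbdef, hu₀def, div_lt_div_iff₀ hcz hz, div_lt_iff₀ hcz]
        constructor <;> intro h <;> nlinarith
      have h2 := lintegral_affine F hFmeas z⁻¹ 0 (inv_pos.2 hz) (Ioi b) measurableSet_Ioi
      rw [hpre2, inv_inv] at h2
      -- excess side splitting
      have hsplitv : ∫⁻ v in Ioi (y / c), F v
          = (∫⁻ v in Ioc (y / c) b, F v) + ∫⁻ v in Ioi b, F v := by
        rw [← Ioc_union_Ioi_eq_Ioi hycb, lintegral_union measurableSet_Ioi
          Ioc_disjoint_Ioi_same]
      have hAfin : ∫⁻ v in Ioc (y / c) b, F v ≠ ⊤ :=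
        hfin _ (fun v hv => lt_trans (by positivity) hv.1)
      have hBfin : ∫⁻ v in Ioi b, F v ≠ ⊤ :=
        hfin _ (Ioi_subset_Ioi (by positivity))
      rw [key, hsplitu, hmax1, hmax2, h1, h2, hexcess (y / c) (by positivity),
        hexcess b (by positivity), hsplitv]
      have h₁ : ENNReal.ofReal c * ∫⁻ v in Ioc (y / c) b, F v ≠ ⊤ :=
        ENNReal.mul_ne_top ENNReal.ofReal_ne_top hAfin
      have h₂ : ENNReal.ofReal z * ∫⁻ v in Ioi b, F v ≠ ⊤ :=
        ENNReal.mul_ne_top ENNReal.ofReal_ne_top hBfin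
      rw [ENNReal.toReal_mul, ENNReal.toReal_add h₁ h₂]
      simp only [ENNReal.toReal_mul, ENNReal.toReal_add hAfin hBfin,
        ENNReal.toReal_ofReal hα.le, ENNReal.toReal_ofReal hc.le, ENNReal.toReal_ofReal hz.le]
      ring
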